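/- Let L₀ := { f : ℝ^d → ℝ : f bounded and Lipschitz, f(0) = 0, f(x) = o(|x|) as x → 0 }. Let F : L₀ → ℝ be a functional which is monotone (f ≤ g pointwise implies F[f] ≤ F[g]), sub-additive (F[f+g] ≤ F[f] + F[g]), positively homogeneous (F[λf] = λF[f] for λ ≥ 0), and which satisfies the growth bound: there exists a constant C such that F[f] ≤ C·a whenever f ∈ L₀ satisfies f(x) ≤ a|x| for all x. If f_n ∈ L₀ is a sequence with f_n ↓ 0 pointwise (nonincreasing and converging to 0 at every point), then F[f_n] ↓ 0. -/

import Mathlib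

open Filter Topology

/-- The Euclidean norm of a vector in `α → ℝ`. -/
noncomputable def euclNorm {α : Type*} [Fintype α] (x : α → ℝ) : ℝ :=
  Real.sqrt (∑ i, (x i) ^ 2)

/-- Membership in `L₀`: bounded, Lipschitz, vanishing at `0` and `o(|x|)` as `x → 0`. -/
def MemL0 {d : ℕ} (f : (Fin d → ℝ) → ℝ) : Prop :=
  (∃ M, ∀ x, |f x| ≤ M) ∧
  (∃ K : ℝ, ∀ x y, |f x - f y| ≤ K * euclNorm (x - y)) ∧
  f 0 = 0 ∧
  (∀ ε : ℝ, 0 < ε → ∃ η : ℝ, 0 < η ∧ ∀ x, euclNorm x ≤ η → |f x| ≤ ε * euclNorm x)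

namespace Stmt9Aux

variable {d : ℕ}

lemma euclNorm_eq_norm (x : Fin d → ℝ) :
    euclNorm x = ‖(WithLp.equiv 2 (Fin d → ℝ)).symm x‖ := by
  rw [EuclideanSpace.norm_eq]
  simp [euclNorm, Real.norm_eq_abs, sq_abs]

lemma euclNorm_nonneg (x : Fin d → ℝ) : 0 ≤ euclNorm x := Real.sqrt_nonneg _

lemma euclNorm_zero : euclNorm (0 : Fin d → ℝ) = 0 := by simp [euclNorm]

lemma abs_euclNorm_sub (x y : Fin d → ℝ) :
    |euclNorm x - euclNorm y| ≤ euclNorm (x - y) := by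
  rw [euclNorm_eq_norm, euclNorm_eq_norm, euclNorm_eq_norm,
    (by exact WithLp.toLp_sub (p := 2) x y : (WithLp.equiv 2 (Fin d → ℝ)).symm (x - y) = (WithLp.equiv 2 (Fin d → ℝ)).symm x - (WithLp.equiv 2 (Fin d → ℝ)).symm y)]
  exact abs_norm_sub_norm_le _ _

lemma abs_apply_le_euclNorm (x : Fin d → ℝ) (i : Fin d) : |x i| ≤ euclNorm x := by
  have h : (x i) ^ 2 ≤ ∑ j, (x j) ^ 2 :=
    Finset.single_le_sum (fun j _ => sq_nonneg (x j)) (Finset.mem_univ i)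
  calc |x i| = Real.sqrt ((x i) ^ 2) := (Real.sqrt_sq_eq_abs _).symm
  _ ≤ euclNorm x := Real.sqrt_le_sqrt h

lemma continuous_euclNorm : Continuous (euclNorm (α := Fin d)) :=
  Real.continuous_sqrt.comp (continuous_finset_sum _ fun i _ => (continuous_apply i).pow 2)

lemma continuous_of_lip {f : (Fin d → ℝ) → ℝ} {K : ℝ}
    (h : ∀ x y, |f x - f y| ≤ K * euclNorm (x - y)) : Continuous f := by
  have hg : Continuous (f ∘ (WithLp.equiv 2 (Fin d → ℝ))) := by
    apply LipschitzWith.continuous (K := Real.toNNReal K)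
    apply LipschitzWith.of_dist_le_mul
    intro a b
    have h2 := h (WithLp.equiv 2 (Fin d → ℝ) a) (WithLp.equiv 2 (Fin d → ℝ) b)
    rw [← (by exact WithLp.ofLp_sub (p := 2) a b : (WithLp.equiv 2 (Fin d → ℝ)) (a - b) = (WithLp.equiv 2 (Fin d → ℝ)) a - (WithLp.equiv 2 (Fin d → ℝ)) b)] at h2
    have h3 : euclNorm (WithLp.equiv 2 (Fin d → ℝ) (a - b)) = ‖a - b‖ := by
      rw [euclNorm_eq_norm, Equiv.symm_apply_apply]
    rw [h3] at h2
    rw [Real.dist_eq, dist_eq_norm]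
    refine h2.trans (mul_le_mul_of_nonneg_right (Real.le_coe_toNNReal K) (norm_nonneg _))
  have : f = (f ∘ (WithLp.equiv 2 (Fin d → ℝ))) ∘ (WithLp.equiv 2 (Fin d → ℝ)).symm := by
    funext x; simp
  rw [this]
  exact hg.comp (PiLp.continuous_toLp 2 (fun _ : Fin d => ℝ))


lemma memL0_zero : MemL0 (0 : (Fin d → ℝ) → ℝ) := by
  refine ⟨⟨0, by simp⟩, ⟨0, by simp⟩, rfl, fun ε hε => ⟨1, one_pos, fun x _ => ?_⟩⟩
  simpa using mul_nonneg hε.le (euclNorm_nonneg x)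

lemma memL0_add {f g : (Fin d → ℝ) → ℝ} (hf : MemL0 f) (hg : MemL0 g) : MemL0 (f + g) := by
  obtain ⟨⟨Mf, hMf⟩, ⟨Kf, hKf⟩, hf0, hfo⟩ := hf
  obtain ⟨⟨Mg, hMg⟩, ⟨Kg, hKg⟩, hg0, hgo⟩ := hg
  refine ⟨⟨Mf + Mg, fun x => ?_⟩, ⟨Kf + Kg, fun x y => ?_⟩, by simp [hf0, hg0],
    fun ε hε => ?_⟩
  · exact (abs_add_le _ _).trans (add_le_add (hMf x) (hMg x))
  · have h : (f + g) x - (f + g) y = (f x - f y) + (g x - g y) := by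
      simp [Pi.add_apply]; ring
    rw [h, add_mul]
    exact (abs_add_le _ _).trans (add_le_add (hKf x y) (hKg x y))
  · obtain ⟨η₁, hη₁, h₁⟩ := hfo (ε / 2) (by linarith)
    obtain ⟨η₂, hη₂, h₂⟩ := hgo (ε / 2) (by linarith)
    refine ⟨min η₁ η₂, lt_min hη₁ hη₂, fun x hx => ?_⟩
    have b1 := h₁ x (hx.trans (min_le_left _ _))
    have b2 := h₂ x (hx.trans (min_le_right _ _))
    calc |(f + g) x| ≤ |f x| + |g x| := abs_add_le _ _
    _ ≤ ε / 2 * euclNorm x + ε / 2 * euclNorm x := add_le_add b1 b2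
    _ = ε * euclNorm x := by ring

lemma memL0_smul {f : (Fin d → ℝ) → ℝ} (c : ℝ) (hc : 0 ≤ c) (hf : MemL0 f) :
    MemL0 (c • f) := by
  obtain ⟨⟨Mf, hMf⟩, ⟨Kf, hKf⟩, hf0, hfo⟩ := hf
  refine ⟨⟨c * Mf, fun x => ?_⟩, ⟨c * Kf, fun x y => ?_⟩, by simp [hf0], fun ε hε => ?_⟩
  · rw [Pi.smul_apply, smul_eq_mul, abs_mul, abs_of_nonneg hc]
    exact mul_le_mul_of_nonneg_left (hMf x) hc
  · have h : (c • f) x - (c • f) y = c * (f x - f y) := by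
      simp [Pi.smul_apply, smul_eq_mul]; ring
    rw [h, abs_mul, abs_of_nonneg hc, mul_assoc]
    exact mul_le_mul_of_nonneg_left (hKf x y) hc
  · obtain ⟨η, hη, h⟩ := hfo (ε / (c + 1)) (by positivity)
    refine ⟨η, hη, fun x hx => ?_⟩
    have b := h x hx
    rw [Pi.smul_apply, smul_eq_mul, abs_mul, abs_of_nonneg hc]
    have hcn : c * |f x| ≤ c * (ε / (c + 1) * euclNorm x) :=
      mul_le_mul_of_nonneg_left b hc
    refine hcn.trans ?_
    have h1 : c * (ε / (c + 1)) ≤ ε := by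
      rw [mul_div_assoc', div_le_iff₀ (by linarith)]
      nlinarith
    calc c * (ε / (c + 1) * euclNorm x) = c * (ε / (c + 1)) * euclNorm x := by ring
    _ ≤ ε * euclNorm x := mul_le_mul_of_nonneg_right h1 (euclNorm_nonneg x)

/-- The bump function: 1 outside the ball of radius η, quadratic near 0. -/
noncomputable def psi (η : ℝ) (x : Fin d → ℝ) : ℝ := (min (euclNorm x) η) ^ 2 / η ^ 2

lemma psi_nonneg (η : ℝ) (x : Fin d → ℝ) : 0 ≤ psi η x :=
  div_nonneg (sq_nonneg _) (sq_nonneg _)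

lemma psi_le_one {η : ℝ} (hη : 0 < η) (x : Fin d → ℝ) : psi η x ≤ 1 := by
  rw [psi, div_le_one (by positivity)]
  have h1 : 0 ≤ min (euclNorm x) η := le_min (euclNorm_nonneg x) hη.le
  have h2 : min (euclNorm x) η ≤ η := min_le_right _ _
  nlinarith

lemma psi_eq_one {η : ℝ} (hη : 0 < η) {x : Fin d → ℝ} (hx : η ≤ euclNorm x) :
    psi η x = 1 := by
  rw [psi, min_eq_right hx, div_self (by positivity)]

lemma memL0_psi {η : ℝ} (hη : 0 < η) : MemL0 (psi (d := d) η) := by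
  refine ⟨⟨1, fun x => ?_⟩, ⟨2 / η, fun x y => ?_⟩, ?_, fun ε hε => ?_⟩
  · rw [abs_of_nonneg (psi_nonneg η x)]; exact psi_le_one hη x
  · set a := min (euclNorm x) η with ha
    set b := min (euclNorm y) η with hb
    have ha0 : 0 ≤ a := le_min (euclNorm_nonneg x) hη.le
    have hb0 : 0 ≤ b := le_min (euclNorm_nonneg y) hη.le
    have haη : a ≤ η := min_le_right _ _
    have hbη : b ≤ η := min_le_right _ _
    have hab : |a - b| ≤ euclNorm (x - y) := by
      refine (abs_min_sub_min_le_max _ _ _ _).trans ?_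
      rw [sub_self, abs_zero]
      exact max_le (abs_euclNorm_sub x y) (euclNorm_nonneg _)
    have key : |a ^ 2 - b ^ 2| ≤ 2 * η * euclNorm (x - y) := by
      have : |a ^ 2 - b ^ 2| = |a - b| * |a + b| := by
        rw [← abs_mul]; ring_nf
      have habs : |a + b| = a + b := abs_of_nonneg (by linarith)
      rw [this, habs]
      have h1 : |a - b| * (a + b) ≤ euclNorm (x - y) * (2 * η) :=
        mul_le_mul hab (by linarith) (by linarith) (euclNorm_nonneg _)
      linarith
    rw [psi, psi, div_sub_div_same, abs_div, abs_of_pos (by positivity : (0:ℝ) < η ^ 2),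
      div_le_iff₀ (by positivity : (0:ℝ) < η ^ 2)]
    calc |a ^ 2 - b ^ 2| ≤ 2 * η * euclNorm (x - y) := key
    _ = 2 / η * euclNorm (x - y) * η ^ 2 := by field_simp
  · simp [psi, euclNorm_zero, min_eq_left hη.le]
  · refine ⟨min η (ε * η ^ 2), lt_min hη (by positivity), fun x hx => ?_⟩
    have h1 : euclNorm x ≤ η := hx.trans (min_le_left _ _)
    have h2 : euclNorm x ≤ ε * η ^ 2 := hx.trans (min_le_right _ _)
    rw [psi, min_eq_left h1, abs_of_nonneg (div_nonneg (sq_nonneg _) (sq_nonneg _)),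
      div_le_iff₀ (by positivity : (0:ℝ) < η ^ 2)]
    nlinarith [euclNorm_nonneg x]

/-- Dini-type lemma: an antitone sequence of continuous functions converging to 0
pointwise is eventually uniformly ≤ ε on a compact set. -/
lemma dini {K : Set (Fin d → ℝ)} (hK : IsCompact K)
    (fn : ℕ → (Fin d → ℝ) → ℝ) (hcont : ∀ n, Continuous (fn n))
    (hanti : ∀ n x, fn (n + 1) x ≤ fn n x)
    (hto0 : ∀ x, Tendsto (fun n => fn n x) atTop (𝓝 0))
    {ε : ℝ} (hε : 0 < ε) : ∃ N, ∀ n ≥ N, ∀ x ∈ K, fn n x ≤ ε := by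
  have hmono : ∀ x : Fin d → ℝ, Antitone fun n => fn n x := fun x =>
    antitone_nat_of_succ_le fun n => hanti n x
  have key : ∀ x : Fin d → ℝ, ∃ n, fn n x < ε := fun x =>
    ((hto0 x).eventually_lt_const hε).exists
  choose nx hnx using key
  set U : (Fin d → ℝ) → Set (Fin d → ℝ) := fun x => {y | fn (nx x) y < ε} with hU
  obtain ⟨t, _, hcover⟩ := hK.elim_nhds_subcover U fun x _ =>
    (isOpen_lt (hcont (nx x)) continuous_const).mem_nhds (hnx x)
  refine ⟨t.sup nx, fun n hn x hx => ?_⟩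
  obtain ⟨y, hyt, hyU⟩ := Set.mem_iUnion₂.mp (hcover hx)
  have h1 : fn n x ≤ fn (nx y) x := hmono x ((Finset.le_sup hyt).trans hn)
  exact h1.trans hyU.le

lemma isCompact_annulus {η N : ℝ} :
    IsCompact {x : Fin d → ℝ | η ≤ euclNorm x ∧ euclNorm x ≤ N} := by
  apply Metric.isCompact_of_isClosed_isBounded
  · have : {x : Fin d → ℝ | η ≤ euclNorm x ∧ euclNorm x ≤ N} =
        euclNorm ⁻¹' (Set.Icc η N) := rfl
    rw [this]
    exact isClosed_Icc.preimage continuous_euclNorm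
  · rcases le_or_gt 0 N with hN | hN
    · apply (Metric.isBounded_closedBall (x := (0 : Fin d → ℝ)) (r := N)).subset
      intro x hx
      rw [Metric.mem_closedBall, dist_zero_right]
      rw [pi_norm_le_iff_of_nonneg hN]
      intro i
      exact (abs_apply_le_euclNorm x i).trans hx.2
    · have : {x : Fin d → ℝ | η ≤ euclNorm x ∧ euclNorm x ≤ N} = ∅ := by
        ext x
        simp only [Set.mem_setOf_eq, Set.mem_empty_iff_false, iff_false, not_and, not_le]
        intro _
        exact lt_of_lt_of_le hN (euclNorm_nonneg x)
      rw [this]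
      exact Bornology.isBounded_empty

end Stmt9Aux

/-- A monotone, sub-additive, positively homogeneous functional `F` on `L₀`
satisfying the growth bound `F[f] ≤ C·a` whenever `f(x) ≤ a|x|` is continuous from
above at `0`: if `f_n ↓ 0` pointwise then `F[f_n] ↓ 0`. -/
theorem stmt9 {d : ℕ} (F : ((Fin d → ℝ) → ℝ) → ℝ)
    (hmono : ∀ f g, MemL0 f → MemL0 g → (∀ x, f x ≤ g x) → F f ≤ F g)
    (hsub : ∀ f g, MemL0 f → MemL0 g → F (f + g) ≤ F f + F g)
    (hhom : ∀ lam : ℝ, 0 ≤ lam → ∀ f, MemL0 f → F (lam • f) = lam * F f)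
    (C : ℝ)
    (hgrowth : ∀ a : ℝ, 0 ≤ a → ∀ f, MemL0 f → (∀ x, f x ≤ a * euclNorm x) → F f ≤ C * a)
    (fn : ℕ → (Fin d → ℝ) → ℝ) (hfn : ∀ n, MemL0 (fn n))
    (hanti : ∀ n x, fn (n + 1) x ≤ fn n x)
    (hto0 : ∀ x, Filter.Tendsto (fun n => fn n x) atTop (𝓝 0)) :
    Filter.Tendsto (fun n => F (fn n)) atTop (𝓝 0) ∧ ∀ n, F (fn (n + 1)) ≤ F (fn n) := by
  classical
  have hantin : ∀ x, Antitone fun n => fn n x := fun x =>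
    antitone_nat_of_succ_le fun n => hanti n x
  have hpos : ∀ n x, 0 ≤ fn n x := fun n x =>
    le_of_tendsto (hto0 x) (eventually_atTop.mpr ⟨n, fun m hm => hantin x hm⟩)
  have hF0 : F 0 = 0 := by
    have h := hhom 0 le_rfl (fn 0) (hfn 0)
    rwa [zero_smul, zero_mul] at h
  have hFnonneg : ∀ n, 0 ≤ F (fn n) := fun n => by
    rw [← hF0]; exact hmono 0 (fn n) Stmt9Aux.memL0_zero (hfn n) fun x => hpos n x
  have hFanti : ∀ n, F (fn (n + 1)) ≤ F (fn n) := fun n =>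
    hmono _ _ (hfn (n + 1)) (hfn n) fun x => hanti n x
  refine ⟨?_, hFanti⟩
  obtain ⟨⟨M, hM⟩, ⟨K0, hK0⟩, hf00, hfo0⟩ := hfn 0
  have hMnn : 0 ≤ M := le_trans (abs_nonneg _) (hM 0)
  have hf0nn : ∀ x, 0 ≤ fn 0 x := hpos 0
  have hcont : ∀ n, Continuous (fn n) := fun n =>
    Stmt9Aux.continuous_of_lip (hfn n).2.1.choose_spec
  rw [Metric.tendsto_atTop]
  intro δ hδ
  set ε := δ / (2 * (|C| + 1)) with hε_def
  have hε : 0 < ε := by positivity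
  obtain ⟨η, hη, hηbound⟩ := hfo0 ε hε
  set N := max η (M / ε + 1) with hN_def
  have hηN : η ≤ N := le_max_left _ _
  have hMN : M ≤ ε * N := by
    have h1 : M / ε + 1 ≤ N := le_max_right _ _
    have h2 : ε * (M / ε + 1) ≤ ε * N := mul_le_mul_of_nonneg_left h1 hε.le
    have h3 : ε * (M / ε + 1) = M + ε := by field_simp
    linarith
  -- the function u
  set u : (Fin d → ℝ) → ℝ := fun x => min (fn 0 x) (ε * euclNorm x) with hu_def
  have hu_nn : ∀ x, 0 ≤ u x := fun x =>
    le_min (hf0nn x) (mul_nonneg hε.le (Stmt9Aux.euclNorm_nonneg x))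
  have hu_mem : MemL0 u := by
    refine ⟨⟨M, fun x => ?_⟩, ⟨K0 + ε, fun x y => ?_⟩, ?_, fun ε₂ hε₂ => ?_⟩
    · rw [abs_of_nonneg (hu_nn x)]
      exact (min_le_left _ _).trans ((le_abs_self _).trans (hM x))
    · refine (abs_min_sub_min_le_max _ _ _ _).trans ?_
      have h1 : |fn 0 x - fn 0 y| ≤ K0 * euclNorm (x - y) := hK0 x y
      have h2 : |ε * euclNorm x - ε * euclNorm y| ≤ ε * euclNorm (x - y) := by
        rw [← mul_sub, abs_mul, abs_of_pos hε]
        exact mul_le_mul_of_nonneg_left (Stmt9Aux.abs_euclNorm_sub x y) hε.le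
      rw [add_mul]
      exact max_le (h1.trans (le_add_of_nonneg_right
        (mul_nonneg hε.le (Stmt9Aux.euclNorm_nonneg _))))
        (h2.trans (le_add_of_nonneg_left (by
          nlinarith [hK0 x y, abs_nonneg (fn 0 x - fn 0 y)])))
    · show min (fn 0 0) (ε * euclNorm 0) = 0
      rw [hf00, Stmt9Aux.euclNorm_zero, mul_zero, min_self]
    · obtain ⟨η₂, hη₂, hb₂⟩ := hfo0 ε₂ hε₂
      refine ⟨η₂, hη₂, fun x hx => ?_⟩
      rw [abs_of_nonneg (hu_nn x)]
      exact (min_le_left _ _).trans ((le_abs_self _).trans (hb₂ x hx))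
  have hFu : F u ≤ C * ε := hgrowth ε hε.le u hu_mem fun x => min_le_right _ _
  -- the function ψ
  have hψmem : MemL0 (Stmt9Aux.psi (d := d) η) := Stmt9Aux.memL0_psi hη
  have hFψnn : 0 ≤ F (Stmt9Aux.psi η) := by
    rw [← hF0]
    exact hmono 0 _ Stmt9Aux.memL0_zero hψmem fun x => Stmt9Aux.psi_nonneg η x
  set ε' := δ / (2 * (F (Stmt9Aux.psi η) + 1)) with hε'_def
  have hε' : 0 < ε' := by positivity
  -- Dini
  obtain ⟨Nn, hNn⟩ := Stmt9Aux.dini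
    (Stmt9Aux.isCompact_annulus (η := η) (N := N)) fn hcont hanti hto0 hε'
  refine ⟨Nn, fun n hn => ?_⟩
  rw [Real.dist_eq, sub_zero, abs_of_nonneg (hFnonneg n)]
  -- pointwise domination
  have hdom : ∀ x, fn n x ≤ u x + ε' * Stmt9Aux.psi η x := by
    intro x
    have hψnn := Stmt9Aux.psi_nonneg η x
    rcases le_or_gt (euclNorm x) η with hle | hgt
    · have h1 : fn n x ≤ fn 0 x := hantin x (Nat.zero_le n)
      have h2 : fn 0 x ≤ ε * euclNorm x := (le_abs_self _).trans (hηbound x hle)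
      have h3 : fn n x ≤ u x := le_min h1 (h1.trans h2)
      nlinarith
    rcases le_or_gt (euclNorm x) N with hle2 | hgt2
    · have h1 : fn n x ≤ ε' := hNn n hn x ⟨hgt.le, hle2⟩
      have hψ1 : Stmt9Aux.psi η x = 1 := Stmt9Aux.psi_eq_one hη hgt.le
      rw [hψ1, mul_one]
      linarith [hu_nn x]
    · have h1 : fn n x ≤ fn 0 x := hantin x (Nat.zero_le n)
      have h2 : fn 0 x ≤ M := (le_abs_self _).trans (hM x)
      have h3 : ε * N ≤ ε * euclNorm x := mul_le_mul_of_nonneg_left hgt2.le hε.le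
      have h4 : fn n x ≤ u x := le_min h1 (by linarith)
      nlinarith
  set vf : (Fin d → ℝ) → ℝ := ε' • Stmt9Aux.psi (d := d) η with hvf_def
  have mem2 : MemL0 vf := Stmt9Aux.memL0_smul ε' hε'.le hψmem
  have hsumMem : MemL0 (u + vf) := Stmt9Aux.memL0_add hu_mem mem2
  have step1 : F (fn n) ≤ F (u + vf) := by
    refine hmono _ _ (hfn n) hsumMem fun x => ?_
    have := hdom x
    simpa [hvf_def] using this
  have step2 : F (u + vf) ≤ F u + F vf := hsub _ _ hu_mem mem2
  have step3 : F vf = ε' * F (Stmt9Aux.psi η) := by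
    rw [hvf_def]; exact hhom ε' hε'.le _ hψmem
  have hCbound : C * ε < δ / 2 := by
    have h1 : C * ε ≤ |C| * ε := mul_le_mul_of_nonneg_right (le_abs_self C) hε.le
    have h2 : |C| * ε < (|C| + 1) * ε := by nlinarith
    have h3 : (|C| + 1) * ε = δ / 2 := by
      rw [hε_def]; field_simp
    linarith
  have hψbound : ε' * F (Stmt9Aux.psi η) ≤ δ / 2 := by
    have h1 : ε' * F (Stmt9Aux.psi η) ≤ ε' * (F (Stmt9Aux.psi η) + 1) := by nlinarith
    have h2 : ε' * (F (Stmt9Aux.psi η) + 1) = δ / 2 := by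
      rw [hε'_def]; field_simp
    linarith
  linarith
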